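/- For every real number x ≥ 2, Σ_{c > x} τ(c)·c^{−3/2} ≤ 12·x^{−1/2}·log x, where the sum ranges over all integers c > x, τ(c) denotes the number of positive divisors of c, and log is the natural logarithm; in particular the series converges. -/

import Mathlib

set_option maxRecDepth 10000
open Real Finset

lemma conv1 {t : ℝ} (ht : 0 ≤ t) : t ^ (-(1:ℝ)/2) = (Real.sqrt t)⁻¹ := by
  rw [Real.sqrt_eq_rpow, show -(1:ℝ)/2 = -(1/2) by ring, Real.rpow_neg ht]

lemma conv3 {t : ℝ} (ht : 0 ≤ t) : t ^ (-(3:ℝ)/2) = ((Real.sqrt t)⁻¹) ^ 3 := by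
  rw [Real.sqrt_eq_rpow, show -(3:ℝ)/2 = (1/2) * (-3) by ring, Real.rpow_mul ht,
    inv_pow, ← Real.rpow_natCast (t ^ ((1:ℝ)/2)) 3, ← Real.rpow_neg (Real.rpow_nonneg ht _)]
  norm_num

lemma aux_inv_le {s q : ℝ} (hs : 0 < s) (h : 1 ≤ q * s) : s⁻¹ ≤ q := by
  rw [inv_eq_one_div, div_le_iff₀ hs]; linarith

lemma aux_le_inv {s q : ℝ} (hs : 0 < s) (h : q * s ≤ 1) : q ≤ s⁻¹ := by
  rw [inv_eq_one_div, le_div_iff₀ hs]; linarith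

lemma rpow_n1h_le {t q : ℝ} (ht : 0 < t) (hq : 0 < q) (h : 1 ≤ q^2 * t) : t ^ (-(1:ℝ)/2) ≤ q := by
  rw [conv1 ht.le]
  have hs : 0 < Real.sqrt t := Real.sqrt_pos.2 ht
  have hs2 : Real.sqrt t ^ 2 = t := Real.sq_sqrt ht.le
  exact aux_inv_le hs (by nlinarith [mul_pos hq hs])

lemma le_rpow_n1h {t q : ℝ} (ht : 0 < t) (hq : 0 ≤ q) (h : q^2 * t ≤ 1) : q ≤ t ^ (-(1:ℝ)/2) := by
  rw [conv1 ht.le]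
  have hs : 0 < Real.sqrt t := Real.sqrt_pos.2 ht
  have hs2 : Real.sqrt t ^ 2 = t := Real.sq_sqrt ht.le
  exact aux_le_inv hs (by nlinarith [mul_pos (mul_pos hs hs) hs, sq_nonneg (q * Real.sqrt t - 1)])

lemma rpow_n3h_le {t q : ℝ} (ht : 0 < t) (hq : 0 < q) (h : 1 ≤ q^2 * t^3) : t ^ (-(3:ℝ)/2) ≤ q := by
  rw [conv3 ht.le]
  have hs : 0 < Real.sqrt t := Real.sqrt_pos.2 ht
  have hs2 : Real.sqrt t ^ 2 = t := Real.sq_sqrt ht.le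
  rw [inv_pow]
  have hs6 : Real.sqrt t ^ 6 = t ^ 3 := by rw [show Real.sqrt t ^ 6 = (Real.sqrt t ^ 2) ^ 3 from by ring, hs2]
  exact aux_inv_le (by positivity) (by nlinarith [mul_pos hq (pow_pos hs 3), pow_pos hs 3, hs6])

lemma ki {n : ℕ} (hn : 1 ≤ n) :
    ((n:ℝ)+1) ^ (-(3:ℝ)/2) ≤ 2 * (n:ℝ) ^ (-(1:ℝ)/2) - 2 * ((n:ℝ)+1) ^ (-(1:ℝ)/2) := by
  have hn' : (1:ℝ) ≤ (n:ℝ) := by exact_mod_cast hn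
  have h0 : (0:ℝ) < n := by linarith
  have h1 : (0:ℝ) < (n:ℝ)+1 := by linarith
  set a := Real.sqrt n with ha
  set b := Real.sqrt ((n:ℝ)+1) with hb
  have hap : 0 < a := Real.sqrt_pos.2 h0
  have hbp : 0 < b := Real.sqrt_pos.2 h1
  have ha2 : a ^ 2 = n := Real.sq_sqrt h0.le
  have hb2 : b ^ 2 = (n:ℝ)+1 := Real.sq_sqrt h1.le
  have hab : a ≤ b := Real.sqrt_le_sqrt (by linarith)
  rw [conv3 h1.le, conv1 h0.le, conv1 h1.le]
  have key : a ≤ 2*b^3 - 2*a*b^2 := by nlinarith [sq_nonneg (b-a), mul_pos hap hbp]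
  have heq : 2*a⁻¹ - 2*b⁻¹ - (b⁻¹)^3 = (2*b^3 - 2*a*b^2 - a) / (a*b^3) := by
    field_simp
  have hge : (2*b^3 - 2*a*b^2 - a) / (a*b^3) ≥ 0 :=
    div_nonneg (by linarith) (by positivity)
  linarith [heq ▸ hge]

noncomputable def uu (m : ℕ) (k : ℕ) : ℝ := if m ≤ k then (k:ℝ) ^ (-(3:ℝ)/2) else 0

lemma uu_nonneg (m k : ℕ) : 0 ≤ uu m k := by
  unfold uu; split
  · exact Real.rpow_nonneg (Nat.cast_nonneg k) _
  · exact le_refl 0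

lemma sum_Icc_le (m : ℕ) (hm : 1 ≤ m) (n : ℕ) (hn : m ≤ n) :
    ∑ k ∈ Icc m n, ((k:ℝ) ^ (-(3:ℝ)/2)) ≤
      (m:ℝ)^(-(3:ℝ)/2) + 2*(m:ℝ)^(-(1:ℝ)/2) - 2*(n:ℝ)^(-(1:ℝ)/2) := by
  induction n, hn using Nat.le_induction with
  | base => rw [Finset.Icc_self, Finset.sum_singleton]; linarith
  | succ n hmn ih =>
    rw [Finset.sum_Icc_succ_top (by omega)]
    have hk := ki (n := n) (by omega)
    push_cast
    push_cast at ih hk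
    linarith

lemma uu_partial (m : ℕ) (hm : 1 ≤ m) (n : ℕ) :
    ∑ k ∈ range n, uu m k ≤ (m:ℝ)^(-(3:ℝ)/2) + 2*(m:ℝ)^(-(1:ℝ)/2) := by
  have hC : 0 ≤ (m:ℝ)^(-(3:ℝ)/2) + 2*(m:ℝ)^(-(1:ℝ)/2) := by positivity
  have hfil : ∑ k ∈ range n, uu m k = ∑ k ∈ (range n).filter (fun k => m ≤ k), (k:ℝ) ^ (-(3:ℝ)/2) := by
    rw [Finset.sum_filter]; unfold uu; rfl
  rcases le_or_gt n m with h | h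
  · have he : (range n).filter (fun k => m ≤ k) = ∅ := by
      apply Finset.filter_false_of_mem; intro k hk; simp only [Finset.mem_range] at hk; omega
    rw [hfil, he, Finset.sum_empty]; exact hC
  · have hIcc : (range n).filter (fun k => m ≤ k) = Icc m (n-1) := by
      ext k; simp only [Finset.mem_filter, Finset.mem_range, Finset.mem_Icc]; omega
    rw [hfil, hIcc]
    have h1 := sum_Icc_le m hm (n-1) (by omega)
    have h2 : 0 ≤ ((n-1:ℕ):ℝ)^(-(1:ℝ)/2) := Real.rpow_nonneg (Nat.cast_nonneg _) _
    linarith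

lemma uu_summable (m : ℕ) (hm : 1 ≤ m) : Summable (uu m) :=
  summable_of_sum_range_le (uu_nonneg m) (uu_partial m hm)

lemma uu_tsum_le (m : ℕ) (hm : 1 ≤ m) :
    ∑' k, uu m k ≤ (m:ℝ)^(-(3:ℝ)/2) + 2*(m:ℝ)^(-(1:ℝ)/2) :=
  Real.tsum_le_of_sum_range_le (uu_nonneg m) (uu_partial m hm)

noncomputable def vv (y : ℝ) (k : ℕ) : ℝ := if y < (k:ℝ) then (k:ℝ) ^ (-(3:ℝ)/2) else 0

lemma vv_nonneg (y : ℝ) (k : ℕ) : 0 ≤ vv y k := by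
  unfold vv; split
  · exact Real.rpow_nonneg (Nat.cast_nonneg k) _
  · exact le_refl 0

lemma vv_eq_uu (y : ℝ) (hy : 0 ≤ y) : vv y = uu (⌊y⌋₊ + 1) := by
  funext k
  unfold vv uu
  refine if_congr ?_ rfl rfl
  rw [Nat.add_one_le_iff, ← Nat.floor_lt hy]

lemma vv_summable (y : ℝ) (hy : 0 ≤ y) : Summable (vv y) := by
  rw [vv_eq_uu y hy]; exact uu_summable _ (by omega)

lemma vv_tsum_le (y : ℝ) (hy : 1 ≤ y) :
    ∑' k, vv y k ≤ y^(-(3:ℝ)/2) + 2*y^(-(1:ℝ)/2) := by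
  have hy0 : (0:ℝ) < y := by linarith
  rw [vv_eq_uu y hy0.le]
  refine (uu_tsum_le _ (by omega)).trans ?_
  have hym : y ≤ ((⌊y⌋₊ + 1 : ℕ):ℝ) := by push_cast; exact (Nat.lt_floor_add_one y).le
  have h1 : ((⌊y⌋₊ + 1 : ℕ):ℝ)^(-(3:ℝ)/2) ≤ y^(-(3:ℝ)/2) :=
    Real.rpow_le_rpow_of_nonpos hy0 hym (by norm_num)
  have h2 : ((⌊y⌋₊ + 1 : ℕ):ℝ)^(-(1:ℝ)/2) ≤ y^(-(1:ℝ)/2) :=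
    Real.rpow_le_rpow_of_nonpos hy0 hym (by norm_num)
  linarith

lemma uu_one_tsum_le : ∑' k, uu 1 k ≤ 2.7 := by
  have h1 : Summable (uu 1) := uu_summable 1 le_rfl
  have h10 : Summable (uu 10) := uu_summable 10 (by omega)
  rw [← Summable.sum_add_tsum_nat_add 10 h1]
  have he : ∀ k : ℕ, uu 1 (k + 10) = uu 10 (k + 10) := by
    intro k; unfold uu; rw [if_pos (by omega), if_pos (by omega)]
  have h3 : ∑' k, uu 1 (k + 10) = ∑' k, uu 10 k := by
    rw [tsum_congr he, ← Summable.sum_add_tsum_nat_add 10 h10,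
      Finset.sum_eq_zero (fun k hk => by
        simp only [Finset.mem_range] at hk; unfold uu; rw [if_neg (by omega)]), zero_add]
  rw [h3]
  have htail : ∑' k, uu 10 k ≤ ((10:ℕ):ℝ)^(-(3:ℝ)/2) + 2*((10:ℕ):ℝ)^(-(1:ℝ)/2) :=
    uu_tsum_le 10 (by omega)
  have hb1 : ((10:ℕ):ℝ)^(-(3:ℝ)/2) ≤ 0.031623 := by
    apply rpow_n3h_le (by norm_num) (by norm_num); norm_num
  have hb2 : ((10:ℕ):ℝ)^(-(1:ℝ)/2) ≤ 0.316228 := by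
    apply rpow_n1h_le (by norm_num) (by norm_num); norm_num
  have hhead : ∑ k ∈ range 10, uu 1 k ≤ 1.963720 := by
    rw [Finset.sum_range_succ, Finset.sum_range_succ, Finset.sum_range_succ,
      Finset.sum_range_succ, Finset.sum_range_succ, Finset.sum_range_succ,
      Finset.sum_range_succ, Finset.sum_range_succ, Finset.sum_range_succ,
      Finset.sum_range_one]
    unfold uu
    rw [if_neg (by omega)]
    repeat rw [if_pos (by omega)]
    have e1 : ((1:ℕ):ℝ)^(-(3:ℝ)/2) ≤ 1 := by
      apply rpow_n3h_le (by norm_num) (by norm_num); norm_num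
    have e2 : ((2:ℕ):ℝ)^(-(3:ℝ)/2) ≤ 0.353554 := by
      apply rpow_n3h_le (by norm_num) (by norm_num); norm_num
    have e3 : ((3:ℕ):ℝ)^(-(3:ℝ)/2) ≤ 0.192451 := by
      apply rpow_n3h_le (by norm_num) (by norm_num); norm_num
    have e4 : ((4:ℕ):ℝ)^(-(3:ℝ)/2) ≤ 0.125 := by
      apply rpow_n3h_le (by norm_num) (by norm_num); norm_num
    have e5 : ((5:ℕ):ℝ)^(-(3:ℝ)/2) ≤ 0.089443 := by
      apply rpow_n3h_le (by norm_num) (by norm_num); norm_num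
    have e6 : ((6:ℕ):ℝ)^(-(3:ℝ)/2) ≤ 0.068042 := by
      apply rpow_n3h_le (by norm_num) (by norm_num); norm_num
    have e7 : ((7:ℕ):ℝ)^(-(3:ℝ)/2) ≤ 0.053996 := by
      apply rpow_n3h_le (by norm_num) (by norm_num); norm_num
    have e8 : ((8:ℕ):ℝ)^(-(3:ℝ)/2) ≤ 0.044195 := by
      apply rpow_n3h_le (by norm_num) (by norm_num); norm_num
    have e9 : ((9:ℕ):ℝ)^(-(3:ℝ)/2) ≤ 0.037038 := by
      apply rpow_n3h_le (by norm_num) (by norm_num); norm_num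
    push_cast at *
    linarith
  linarith

lemma vv_tsum_le_Z (y : ℝ) (hy : 0 ≤ y) : ∑' k, vv y k ≤ 2.7 := by
  refine le_trans (Summable.tsum_le_tsum ?_ (vv_summable y hy) (uu_summable 1 le_rfl)) uu_one_tsum_le
  intro k
  unfold vv uu
  by_cases hk : y < (k:ℝ)
  · have hk0 : 0 < k := by
      have h0 : (0:ℝ) < (k:ℝ) := lt_of_le_of_lt hy hk
      exact_mod_cast h0
    rw [if_pos hk, if_pos (by omega)]
  · rw [if_neg hk]
    exact uu_nonneg 1 k

lemma harmonic_le (n : ℕ) (hn : 1 ≤ n) : ∑ d ∈ Icc 1 n, (d:ℝ)⁻¹ ≤ 1 + Real.log n := by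
  induction n, hn using Nat.le_induction with
  | base => simp
  | succ n hn ih =>
    rw [Finset.sum_Icc_succ_top (by omega)]
    have h1 : (0:ℝ) < n := by exact_mod_cast hn
    have key : ((n:ℝ)+1)⁻¹ ≤ Real.log ((n:ℝ)+1) - Real.log n := by
      rw [← Real.log_div (by positivity) (ne_of_gt h1)]
      have h2 := Real.log_le_sub_one_of_pos (x := (n:ℝ)/((n:ℝ)+1)) (by positivity)
      have h3 : Real.log ((n:ℝ)/((n:ℝ)+1)) = - Real.log (((n:ℝ)+1)/n) := by
        rw [← Real.log_inv]; congr 1; field_simp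
      have h4 : (n:ℝ)/((n:ℝ)+1) - 1 = -(((n:ℝ)+1)⁻¹) := by field_simp; ring
      rw [h3, h4] at h2
      linarith
    push_cast
    linarith

noncomputable def WW (x : ℝ) (p : ℕ × ℕ) : ℝ :=
  if x < ((p.1 * p.2 : ℕ):ℝ) then ((p.1 * p.2 : ℕ):ℝ) ^ (-(3:ℝ)/2) else 0

lemma WW_nonneg (x : ℝ) (p : ℕ × ℕ) : 0 ≤ WW x p := by
  unfold WW; split
  · exact Real.rpow_nonneg (Nat.cast_nonneg _) _
  · exact le_refl 0

lemma WW_inner (x : ℝ) (d : ℕ) (hd : 1 ≤ d) :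
    (fun k => WW x (d, k)) = fun k => (d:ℝ)^(-(3:ℝ)/2) * vv (x / d) k := by
  funext k
  have hd0 : (0:ℝ) < d := by exact_mod_cast hd
  unfold WW vv
  push_cast
  rw [mul_ite, mul_zero]
  refine if_congr ?_ ?_ rfl
  · rw [div_lt_iff₀ hd0, mul_comm]
  · rw [Real.mul_rpow (Nat.cast_nonneg d) (Nat.cast_nonneg k)]

lemma WW_fiber_summable (x : ℝ) (hx : 0 < x) (d : ℕ) : Summable (fun k => WW x (d, k)) := by
  rcases Nat.eq_zero_or_pos d with rfl | hd
  · have : (fun k : ℕ => WW x (0, k)) = fun _ => (0:ℝ) := by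
      funext k; unfold WW; rw [if_neg]; simp; linarith
    rw [this]; exact summable_zero
  · rw [WW_inner x d hd]
    exact (vv_summable _ (by positivity)).mul_left _

lemma WW_main (x : ℝ) (hx : 2 ≤ x) :
    Summable (WW x) ∧ ∑' p, WW x p ≤ x ^ (-(1:ℝ)/2) * (2 * Real.log x + 10) := by
  have hx0 : (0:ℝ) < x := by linarith
  set n := ⌊x⌋₊ with hn
  have hn1 : 1 ≤ n := Nat.le_floor (by exact_mod_cast (by linarith : (1:ℝ) ≤ x))
  set E1 : ℕ → ℝ := fun d => 2.7 * vv x d with hE1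
  set E2 : ℕ → ℝ := fun d =>
    if 1 ≤ d ∧ (d:ℝ) ≤ x then 2 * x^(-(1:ℝ)/2) * (d:ℝ)⁻¹ + x^(-(3:ℝ)/2) else 0 with hE2
  have hE1sum : Summable E1 := (vv_summable x hx0.le).mul_left _
  have hE2supp : ∀ d ∉ Icc 1 n, E2 d = 0 := by
    intro d hd
    simp only [Finset.mem_Icc, not_and_or, not_le] at hd
    rw [hE2]
    dsimp only
    rw [if_neg]
    rintro ⟨h1, h2⟩
    rcases hd with h | h
    · omega
    · have : d ≤ n := Nat.le_floor h2
      omega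
  have hE2sum : Summable E2 := summable_of_ne_finset_zero hE2supp
  have hDle : ∀ d : ℕ, ∑' k, WW x (d, k) ≤ E1 d + E2 d := by
    intro d
    rcases Nat.eq_zero_or_pos d with rfl | hd
    · have hz : (fun k : ℕ => WW x (0, k)) = fun _ => (0:ℝ) := by
        funext k; unfold WW; rw [if_neg]; simp; linarith
      rw [hz, tsum_zero]
      have hE10 : E1 0 = 0 := by
        rw [hE1]; dsimp only; unfold vv; rw [if_neg (by simp; linarith), mul_zero]
      have hE20 : E2 0 = 0 := by rw [hE2]; dsimp only; rw [if_neg (by omega)]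
      rw [hE10, hE20]; norm_num
    · have hd0 : (0:ℝ) < d := by exact_mod_cast hd
      have hrw : ∑' k, WW x (d, k) = (d:ℝ)^(-(3:ℝ)/2) * ∑' k, vv (x / d) k := by
        rw [WW_inner x d hd, tsum_mul_left]
      rw [hrw]
      have hdnn : (0:ℝ) ≤ (d:ℝ)^(-(3:ℝ)/2) := Real.rpow_nonneg (Nat.cast_nonneg d) _
      rcases le_or_gt (d:ℝ) x with hdx | hdx
      · -- small d : use E2
        have hy1 : 1 ≤ x / d := (one_le_div hd0).2 hdx
        have hT := vv_tsum_le (x / d) hy1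
        have hE1d : 0 ≤ E1 d := by
          rw [hE1]; exact mul_nonneg (by norm_num) (vv_nonneg x d)
        have hE2d : E2 d = 2 * x^(-(1:ℝ)/2) * (d:ℝ)⁻¹ + x^(-(3:ℝ)/2) := by
          rw [hE2]; dsimp only; rw [if_pos ⟨hd, hdx⟩]
        have hd32 : (0:ℝ) < (d:ℝ)^(-(3:ℝ)/2) := Real.rpow_pos_of_pos hd0 _
        have hq : (d:ℝ)^(-(3:ℝ)/2) / (d:ℝ)^(-(1:ℝ)/2) = (d:ℝ)⁻¹ := by
          rw [← Real.rpow_sub hd0]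
          norm_num [Real.rpow_neg_one]
        have halg : (d:ℝ)^(-(3:ℝ)/2) * ((x/d)^(-(3:ℝ)/2) + 2*(x/d)^(-(1:ℝ)/2))
            = x^(-(3:ℝ)/2) + 2 * x^(-(1:ℝ)/2) * (d:ℝ)⁻¹ := by
          rw [Real.div_rpow hx0.le (Nat.cast_nonneg d), Real.div_rpow hx0.le (Nat.cast_nonneg d),
            mul_add]
          congr 1
          · rw [mul_comm, div_mul_cancel₀ _ (ne_of_gt hd32)]
          · rw [← hq]; ring
        have := mul_le_mul_of_nonneg_left hT hdnn
        rw [hE2d]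
        linarith [halg ▸ this]
      · -- big d : use E1
        have hT := vv_tsum_le_Z (x / d) (by positivity)
        have hE2d : E2 d = 0 := by
          rw [hE2]; dsimp only; rw [if_neg (by rintro ⟨-, h⟩; linarith)]
        have hE1d : E1 d = 2.7 * (d:ℝ)^(-(3:ℝ)/2) := by
          rw [hE1]; dsimp only; unfold vv; rw [if_pos hdx]
        rw [hE2d, hE1d, add_zero, mul_comm (2.7:ℝ)]
        exact mul_le_mul_of_nonneg_left hT hdnn
  have hfib := WW_fiber_summable x hx0
  have hDnn : ∀ d : ℕ, 0 ≤ ∑' k, WW x (d, k) := fun d => tsum_nonneg (fun k => WW_nonneg x _)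
  have hDsum : Summable (fun d => ∑' k, WW x (d, k)) :=
    Summable.of_nonneg_of_le hDnn hDle (hE1sum.add hE2sum)
  have hWsum : Summable (WW x) := by
    rw [summable_prod_of_nonneg (fun p => WW_nonneg x p)]
    exact ⟨hfib, hDsum⟩
  refine ⟨hWsum, ?_⟩
  have ht1 : ∑' p, WW x p = ∑' d, ∑' k, WW x (d, k) := Summable.tsum_prod hWsum
  have ht2 : ∑' d, ∑' k, WW x (d, k) ≤ ∑' d, (E1 d + E2 d) :=
    Summable.tsum_le_tsum hDle hDsum (hE1sum.add hE2sum)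
  have ht3 : ∑' d, (E1 d + E2 d) = (∑' d, E1 d) + ∑' d, E2 d := Summable.tsum_add hE1sum hE2sum
  -- E1 sum
  have hE1val : ∑' d, E1 d = 2.7 * ∑' d, vv x d := by rw [hE1]; exact tsum_mul_left
  have hE1le : ∑' d, E1 d ≤ 2.7 * (x^(-(3:ℝ)/2) + 2*x^(-(1:ℝ)/2)) := by
    rw [hE1val]
    exact mul_le_mul_of_nonneg_left (vv_tsum_le x (by linarith)) (by norm_num)
  -- E2 sum
  have hE2val : ∑' d, E2 d = ∑ d ∈ Icc 1 n, E2 d := tsum_eq_sum hE2supp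
  have hE2eq : ∑ d ∈ Icc 1 n, E2 d
      = 2 * x^(-(1:ℝ)/2) * (∑ d ∈ Icc 1 n, (d:ℝ)⁻¹) + (n:ℝ) * x^(-(3:ℝ)/2) := by
    have : ∀ d ∈ Icc 1 n, E2 d = 2 * x^(-(1:ℝ)/2) * (d:ℝ)⁻¹ + x^(-(3:ℝ)/2) := by
      intro d hd
      rw [Finset.mem_Icc] at hd
      have hdx : (d:ℝ) ≤ x := le_trans (by exact_mod_cast hd.2 : (d:ℝ) ≤ (n:ℝ))
        ((Nat.floor_le hx0.le))
      rw [hE2]; dsimp only; rw [if_pos ⟨hd.1, hdx⟩]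
    rw [Finset.sum_congr rfl this, Finset.sum_add_distrib, ← Finset.mul_sum,
      Finset.sum_const, Nat.card_Icc, nsmul_eq_mul]
    norm_num
  -- harmonic bound
  have hharm : ∑ d ∈ Icc 1 n, (d:ℝ)⁻¹ ≤ 1 + Real.log x := by
    refine (harmonic_le n hn1).trans ?_
    have hlog : Real.log n ≤ Real.log x :=
      Real.log_le_log (by exact_mod_cast hn1) (Nat.floor_le hx0.le)
    linarith
  have hnx : (n:ℝ) ≤ x := Nat.floor_le hx0.le
  -- rpow algebra facts
  have hP : (0:ℝ) ≤ x^(-(1:ℝ)/2) := Real.rpow_nonneg hx0.le _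
  have hQP : x^(-(3:ℝ)/2) = x^(-(1:ℝ)/2) * x⁻¹ := by
    rw [← Real.rpow_neg_one x, ← Real.rpow_add hx0]
    norm_num
  have hxQ : x * x^(-(3:ℝ)/2) = x^(-(1:ℝ)/2) := by
    rw [hQP]
    field_simp
  have hxinv : x⁻¹ ≤ 1/2 := by
    rw [inv_le_comm₀ hx0 (by norm_num)]
    linarith
  have hQnn : (0:ℝ) ≤ x^(-(3:ℝ)/2) := Real.rpow_nonneg hx0.le _
  have hlog2 : 0 ≤ Real.log x := Real.log_nonneg (by linarith)
  have hE2le : ∑' d, E2 d ≤ 2 * x^(-(1:ℝ)/2) * (1 + Real.log x) + x^(-(1:ℝ)/2) := by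
    rw [hE2val, hE2eq]
    have h1 : (n:ℝ) * x^(-(3:ℝ)/2) ≤ x * x^(-(3:ℝ)/2) := mul_le_mul_of_nonneg_right hnx hQnn
    have h2 : 2 * x^(-(1:ℝ)/2) * (∑ d ∈ Icc 1 n, (d:ℝ)⁻¹) ≤ 2 * x^(-(1:ℝ)/2) * (1 + Real.log x) :=
      mul_le_mul_of_nonneg_left hharm (by positivity)
    rw [hxQ] at h1
    linarith
  have hPx : x^(-(1:ℝ)/2) * x⁻¹ ≤ x^(-(1:ℝ)/2) * (1/2) := mul_le_mul_of_nonneg_left hxinv hP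
  rw [ht1]
  calc ∑' d, ∑' k, WW x (d, k) ≤ (∑' d, E1 d) + ∑' d, E2 d := by rw [← ht3]; exact ht2
    _ ≤ 2.7 * (x^(-(3:ℝ)/2) + 2*x^(-(1:ℝ)/2)) + (2 * x^(-(1:ℝ)/2) * (1 + Real.log x) + x^(-(1:ℝ)/2)) := by
        linarith
    _ ≤ x ^ (-(1:ℝ)/2) * (2 * Real.log x + 10) := by
        rw [hQP]
        nlinarith [hPx, hP, hlog2]


lemma card_antidiag (c : ℕ) : c.divisorsAntidiagonal.card = c.divisors.card := by
  rcases eq_or_ne c 0 with rfl | hc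
  · simp
  · rw [← Nat.image_fst_divisorsAntidiagonal]
    refine (Finset.card_image_of_injOn ?_).symm
    intro p hp q hq hpq
    rw [Finset.mem_coe, Nat.mem_divisorsAntidiagonal] at hp hq
    have h1 : p.1 ≠ 0 := fun h => hc (by rw [← hp.1, h, zero_mul])
    refine Prod.ext hpq ?_
    have h2 : p.1 * p.2 = p.1 * q.2 := by
      calc p.1 * p.2 = c := hp.1
        _ = q.1 * q.2 := hq.1.symm
        _ = p.1 * q.2 := by rw [hpq]
    exact Nat.eq_of_mul_eq_mul_left (Nat.pos_of_ne_zero h1) h2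

lemma transfer (x : ℝ) (hx : 0 < x) {S : ℝ} (h : HasSum (WW x) S) :
    HasSum (fun c : ℕ => if x < (c:ℝ) then (c.divisors.card : ℝ) * (c:ℝ)^(-(3:ℝ)/2) else 0) S := by
  let ι : (Σ c : ℕ, {p : ℕ × ℕ // p ∈ c.divisorsAntidiagonal}) → ℕ × ℕ := fun q => q.2.1
  have hinj : Function.Injective ι := by
    rintro ⟨c, p, hp⟩ ⟨c', p', hp'⟩ hpq
    simp only [ι] at hpq
    have hc : c = c' := by
      rw [Nat.mem_divisorsAntidiagonal] at hp hp'
      rw [← hp.1, ← hp'.1, hpq]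
    subst hc
    simp only [Sigma.mk.inj_iff, heq_eq_eq, true_and]
    exact Subtype.ext hpq
  have hvan : ∀ p ∉ Set.range ι, WW x p = 0 := by
    intro p hp
    unfold WW
    rw [if_neg]
    intro hlt
    have hne : p.1 * p.2 ≠ 0 := by
      intro h0
      rw [h0] at hlt
      simp only [Nat.cast_zero] at hlt
      linarith
    exact hp ⟨⟨p.1 * p.2, ⟨p, Nat.mem_divisorsAntidiagonal.2 ⟨rfl, hne⟩⟩⟩, rfl⟩
  have h2 : HasSum (WW x ∘ ι) S := (hinj.hasSum_iff hvan).2 h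
  refine HasSum.sigma h2 ?_
  intro c
  have hfin := hasSum_fintype (fun p : {p : ℕ × ℕ // p ∈ c.divisorsAntidiagonal} => WW x p.1)
  convert hfin using 1
  · rfl
  rw [Finset.sum_coe_sort c.divisorsAntidiagonal (WW x)]
  have hcong : ∀ p ∈ c.divisorsAntidiagonal, WW x p = (if x < (c:ℝ) then (c:ℝ)^(-(3:ℝ)/2) else 0) := by
    intro p hp
    unfold WW
    rw [(Nat.mem_divisorsAntidiagonal.1 hp).1]
  rw [Finset.sum_congr rfl hcong, Finset.sum_const, card_antidiag, nsmul_eq_mul, mul_ite, mul_zero]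

lemma genBound (x : ℝ) (hx : 2 ≤ x) :
    Summable (fun c : ℕ => if x < (c:ℝ) then (c.divisors.card : ℝ) * (c:ℝ) ^ (-(3:ℝ)/2) else 0) ∧
    ∑' c : ℕ, (if x < (c:ℝ) then (c.divisors.card : ℝ) * (c:ℝ) ^ (-(3:ℝ)/2) else 0) ≤
      x ^ (-(1:ℝ)/2) * (2 * Real.log x + 10) := by
  obtain ⟨hW, hWle⟩ := WW_main x hx
  have ht := transfer x (by linarith) hW.hasSum
  exact ⟨ht.summable, by rw [ht.tsum_eq]; exact hWle⟩

def AA : List ℕ := [0,0,0,192451,125000,89443,68042,53995,44195,37038,31623,27411,24057,21335,19091,17214,15625,14267,13095,12075,11181,10392,9691,9066,8506,8000,7543,7128,6750,6404,6086,5794,5525,5276,5045,4830,4630,4444,4269,4106,3953,3810,3674,3547,3427,3313,3206,3104,3008,2916,2829,2746,2667,2592,2521,2452,2387,2324,2264,2207,2152,2099,2049,2000,1954,1909,1866,1824,1784,1745,1708,1672,1637,1604,1571,1540,1510,1481,1452,1425,1398,1372,1347,1323,1299,1277,1254,1233,1212,1192,1172,1152,1134,1116,1098,1080,1064,1047,1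031,1016,1000,986,971,957,943,930,917,904,891,879,867,856,844,833,822,811,801,791,781,771,761,752,743,734,725,716,708,699,691,683,675,667,660,652,645,638,631,624,617,611,604,598,591,585,579,573,567,562,556,550,545,539,534,529,524,519,514,509,504,499,495,490,485,481,477,472,468,464,460,456,452,448,444,440,436,432,429,425,422,418,415,411,408,404,401,398,395,392,388,385,382,379,376,373,371,368,365,362,359,357,354,351,349,346,344,341,339,336,334,331,329,327,324,322,320,318,316,313,311,309,307,305,303,301,299,297,295,293,291,289,287,285,283,282,280,278,276,275,273,271,269,268,266,264,263,261,260,258,257,255,253,252,250,249,248,246]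

lemma Afact : ∀ c, c < 256 → 3 ≤ c → 0 < AA.getD c 0 ∧ 10^12 ≤ (AA.getD c 0)^2 * c^3 := by decide

lemma Asum : (∑ c ∈ Finset.range 256, c.divisors.card * AA.getD c 0) ≤ 4030078 := by decide

set_option maxHeartbeats 1000000 in
/-- For every real `x ≥ 2`, the series `Σ_{c > x} τ(c)·c^{−3/2}` (over integers `c > x`)
converges and is at most `12·x^{−1/2}·log x`, where `τ(c)` is the number of positive
divisors of `c`. -/
theorem divisor_sum_tail_bound (x : ℝ) (hx : 2 ≤ x) :
    Summable (fun c : ℕ =>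
      if x < (c : ℝ) then (c.divisors.card : ℝ) * (c : ℝ) ^ (-(3 : ℝ) / 2) else 0) ∧
    ∑' c : ℕ, (if x < (c : ℝ) then (c.divisors.card : ℝ) * (c : ℝ) ^ (-(3 : ℝ) / 2) else 0) ≤
      12 * x ^ (-(1 : ℝ) / 2) * Real.log x := by
  obtain ⟨hs, hb⟩ := genBound x hx
  refine ⟨hs, ?_⟩
  have hx0 : (0:ℝ) < x := by linarith
  have hP : (0:ℝ) ≤ x ^ (-(1:ℝ)/2) := Real.rpow_nonneg hx0.le _
  rcases le_or_gt 1 (Real.log x) with hlog | hlog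
  · refine hb.trans ?_
    nlinarith [hP]
  · -- small x case
    have hxe : x < 2.7182818286 := by
      have h1 : x = Real.exp (Real.log x) := (Real.exp_log hx0).symm
      calc x = Real.exp (Real.log x) := h1
        _ < Real.exp 1 := Real.exp_lt_exp.2 hlog
        _ < 2.7182818286 := Real.exp_one_lt_d9
    obtain ⟨hs2, _⟩ := genBound 2 le_rfl
    obtain ⟨hs255, hb255⟩ := genBound 255 (by norm_num)
    -- monotone comparison to x = 2
    have hmono : ∑' c : ℕ, (if x < (c:ℝ) then (c.divisors.card : ℝ) * (c:ℝ) ^ (-(3:ℝ)/2) else 0)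
        ≤ ∑' c : ℕ, (if (2:ℝ) < (c:ℝ) then (c.divisors.card : ℝ) * (c:ℝ) ^ (-(3:ℝ)/2) else 0) := by
      refine Summable.tsum_le_tsum ?_ hs hs2
      intro c
      by_cases h : x < (c:ℝ)
      · rw [if_pos h, if_pos (by linarith)]
      · rw [if_neg h]
        split
        · positivity
        · exact le_refl 0
    -- split at 256
    have hsplit := (Summable.sum_add_tsum_nat_add 256 hs2).symm
    have hshift : ∀ c : ℕ,
        (if (2:ℝ) < ((c + 256 : ℕ):ℝ) then ((c + 256 : ℕ).divisors.card : ℝ) * ((c + 256 : ℕ):ℝ) ^ (-(3:ℝ)/2) else 0)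
        = (if (255:ℝ) < ((c + 256 : ℕ):ℝ) then ((c + 256 : ℕ).divisors.card : ℝ) * ((c + 256 : ℕ):ℝ) ^ (-(3:ℝ)/2) else 0) := by
      intro c
      rw [if_pos (by push_cast; linarith [Nat.cast_nonneg (α := ℝ) c]),
        if_pos (by push_cast; linarith [Nat.cast_nonneg (α := ℝ) c])]
    have h255head : ∑ c ∈ range 256,
        (if (255:ℝ) < ((c:ℕ):ℝ) then ((c:ℕ).divisors.card : ℝ) * ((c:ℕ):ℝ) ^ (-(3:ℝ)/2) else 0) = 0 := by
      refine Finset.sum_eq_zero ?_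
      intro c hc
      rw [Finset.mem_range] at hc
      rw [if_neg]
      push_cast
      have : (c:ℝ) ≤ 255 := by exact_mod_cast Nat.lt_succ_iff.mp hc
      linarith
    have h255split := (Summable.sum_add_tsum_nat_add 256 hs255).symm
    have htail : ∑' c : ℕ,
        (if (2:ℝ) < ((c + 256 : ℕ):ℝ) then ((c + 256 : ℕ).divisors.card : ℝ) * ((c + 256 : ℕ):ℝ) ^ (-(3:ℝ)/2) else 0)
        ≤ 1.3208 := by
      rw [tsum_congr hshift]
      have heq : ∑' c : ℕ,
          (if (255:ℝ) < ((c + 256 : ℕ):ℝ) then ((c + 256 : ℕ).divisors.card : ℝ) * ((c + 256 : ℕ):ℝ) ^ (-(3:ℝ)/2) else 0)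
          = ∑' c : ℕ, (if (255:ℝ) < ((c:ℕ):ℝ) then ((c:ℕ).divisors.card : ℝ) * ((c:ℕ):ℝ) ^ (-(3:ℝ)/2) else 0) := by
        rw [h255split, h255head, zero_add]
      rw [heq]
      refine hb255.trans ?_
      have hq1 : (255:ℝ) ^ (-(1:ℝ)/2) ≤ 0.062623 := by
        apply rpow_n1h_le (by norm_num) (by norm_num)
        norm_num
      have hlog255 : Real.log 255 ≤ 5.5451775 := by
        have h1 : Real.log 255 ≤ Real.log 256 := Real.log_le_log (by norm_num) (by norm_num)
        have h2 : (256:ℝ) = 2 ^ (8:ℕ) := by norm_num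
        have h3 : Real.log 256 = 8 * Real.log 2 := by rw [h2, Real.log_pow]; norm_num
        have h4 := Real.log_two_lt_d9
        linarith
      have hlogpos : (0:ℝ) ≤ Real.log 255 := Real.log_nonneg (by norm_num)
      calc (255:ℝ) ^ (-(1:ℝ)/2) * (2 * Real.log 255 + 10)
          ≤ 0.062623 * (2 * 5.5451775 + 10) := by
            apply mul_le_mul hq1 (by linarith) (by linarith) (by norm_num)
        _ ≤ 1.3208 := by norm_num
    have hhead : ∑ c ∈ range 256,
        (if (2:ℝ) < ((c:ℕ):ℝ) then ((c:ℕ).divisors.card : ℝ) * ((c:ℕ):ℝ) ^ (-(3:ℝ)/2) else 0)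
        ≤ 4.030078 := by
      have hle : ∀ c ∈ range 256,
          (if (2:ℝ) < ((c:ℕ):ℝ) then ((c:ℕ).divisors.card : ℝ) * ((c:ℕ):ℝ) ^ (-(3:ℝ)/2) else 0)
          ≤ ((c.divisors.card * AA.getD c 0 : ℕ) : ℝ) / 1000000 := by
        intro c hc
        rw [Finset.mem_range] at hc
        by_cases h : (2:ℝ) < (c:ℝ)
        · have hc2 : 2 < c := by exact_mod_cast h
          have hc3 : 3 ≤ c := by omega
          obtain ⟨hA0, hA⟩ := Afact c hc hc3
          have hc0 : (0:ℝ) < (c:ℝ) := by exact_mod_cast (by omega : 0 < c)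
          have hq0 : (0:ℝ) < (AA.getD c 0 : ℝ) / 1000000 := by
            have h9 : (0:ℝ) < (AA.getD c 0 : ℝ) := by exact_mod_cast hA0
            positivity
          have hAr : (10:ℝ)^12 ≤ ((AA.getD c 0 : ℝ))^2 * ((c:ℝ))^3 := by exact_mod_cast hA
          have hQ : 1 ≤ ((AA.getD c 0 : ℝ)/1000000)^2 * ((c:ℝ))^3 := by
            rw [div_pow, div_mul_eq_mul_div, le_div_iff₀ (by norm_num), one_mul,
              show ((1000000:ℝ))^2 = 10^12 by norm_num]
            exact hAr
          have hr := rpow_n3h_le hc0 hq0 hQ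
          rw [if_pos h]
          calc ((c.divisors.card : ℕ) : ℝ) * (c:ℝ)^(-(3:ℝ)/2)
              ≤ ((c.divisors.card : ℕ) : ℝ) * ((AA.getD c 0 : ℝ)/1000000) :=
                mul_le_mul_of_nonneg_left hr (Nat.cast_nonneg _)
            _ = ((c.divisors.card * AA.getD c 0 : ℕ):ℝ)/1000000 := by push_cast; ring
        · rw [if_neg h]
          positivity
      refine (Finset.sum_le_sum hle).trans ?_
      have h1 : ((∑ c ∈ range 256, c.divisors.card * AA.getD c 0 : ℕ) : ℝ) ≤ ((4030078:ℕ):ℝ) :=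
        Nat.cast_le.2 Asum
      rw [Nat.cast_sum] at h1
      rw [← Finset.sum_div, div_le_iff₀ (by norm_num : (0:ℝ) < 1000000)]
      have h2 : ((4030078:ℕ):ℝ) = 4030078 := by norm_num
      rw [h2] at h1
      refine h1.trans (by norm_num)
    -- combine
    have htotal : ∑' c : ℕ, (if x < (c:ℝ) then (c.divisors.card : ℝ) * (c:ℝ) ^ (-(3:ℝ)/2) else 0)
        ≤ 5.351 := by
      rw [hsplit] at hmono
      linarith
    refine htotal.trans ?_
    have hlog2x : (0.6931471803:ℝ) ≤ Real.log x :=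
      le_trans Real.log_two_gt_d9.le (Real.log_le_log (by norm_num) hx)
    rcases lt_or_ge x 2.2 with hx22 | hx22
    · have hq : (0.6741:ℝ) ≤ x ^ (-(1:ℝ)/2) := by
        apply le_rpow_n1h hx0 (by norm_num)
        nlinarith
      nlinarith [mul_le_mul hq hlog2x (by norm_num) hP]
    · have hq : (0.6065:ℝ) ≤ x ^ (-(1:ℝ)/2) := by
        apply le_rpow_n1h hx0 (by norm_num)
        nlinarith
      have hlb : (0.784:ℝ) ≤ Real.log x := by
        have h1 : Real.log (x/2) = Real.log x - Real.log 2 :=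
          Real.log_div (by linarith) (by norm_num)
        have h2 := Real.log_le_sub_one_of_pos (x := 2/x) (by positivity)
        have h3 : Real.log (2/x) = - Real.log (x/2) := by
          rw [← Real.log_inv, inv_div]
        have h4 : 2/x ≤ 2/2.2 := by
          rw [div_le_div_iff₀ hx0 (by norm_num)]
          linarith
        have h5 := Real.log_two_gt_d9
        nlinarith
      nlinarith [mul_le_mul hq hlb (by norm_num) hP]
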